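/- With the notation of the setup: (cot²θ̂ + 1)(t₋² + C') = (P − xQ)²/(4k₁²x²) and (cot²θ̂ + 1)(t₊² + C') = (P + xQ)²/(4k₁²x²). Consequently, if the stability condition P > xQ holds then t² + C' > 0 for every t ∈ (t₋, t₊], while if P = xQ then t₋² + C' = 0. -/

import Mathlib

/-- Endpoint values of `(cot²θ̂ + 1)(t² + C')` at `t₋` and `t₊`, and the consequences
of the stability condition `P > xQ` (resp. of the equality `P = xQ`). -/
theorem dHYM_endpoint_identities
    (x k1 k2 θ N P Q C tm tp : ℝ)
    (hx : x ∈ Set.Ioo (0 : ℝ) 1) (hk1 : k1 < 0) (hk2 : k2 ≠ 0)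
    (hθ : θ ∈ Set.Ioo 0 Real.pi)
    (hN : N = Real.sqrt ((1 - k1 ^ 2 + k2 ^ 2) ^ 2 + 4 * k1 ^ 2))
    (hcos : Real.cos θ = (1 - k1 ^ 2 + k2 ^ 2) / N)
    (hsin : Real.sin θ = -(2 * k1) / N)
    (hP : P = 1 + (k1 + k2) ^ 2) (hQ : Q = 1 + (k1 - k2) ^ 2)
    (hC : C = 4 * k1 * k2 * (P - x ^ 2 * Q) / (x ^ 2 * N ^ 2))
    (htm : tm = (1 - x) / x) (htp : tp = (1 + x) / x) :
    (Real.cot θ ^ 2 + 1) * (tm ^ 2 + C) = (P - x * Q) ^ 2 / (4 * k1 ^ 2 * x ^ 2) ∧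
    (Real.cot θ ^ 2 + 1) * (tp ^ 2 + C) = (P + x * Q) ^ 2 / (4 * k1 ^ 2 * x ^ 2) ∧
    (P > x * Q → ∀ t ∈ Set.Ioc tm tp, 0 < t ^ 2 + C) ∧
    (P = x * Q → tm ^ 2 + C = 0) := by
  obtain ⟨hx0, hx1⟩ := hx
  have hxne : x ≠ 0 := ne_of_gt hx0
  have hk1ne : k1 ≠ 0 := ne_of_lt hk1
  have hk1sq : 0 < k1 ^ 2 := by positivity
  have hNpos : 0 < N := by
    rw [hN]; exact Real.sqrt_pos.mpr (by positivity)
  have hNne : N ≠ 0 := ne_of_gt hNpos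
  have hN2 : N ^ 2 = (1 - k1 ^ 2 + k2 ^ 2) ^ 2 + 4 * k1 ^ 2 := by
    rw [hN, sq, Real.mul_self_sqrt (by positivity)]
  have hNPQ : N ^ 2 = P * Q := by rw [hN2, hP, hQ]; ring
  have hsinpos : 0 < Real.sin θ := by
    rw [hsin]
    apply div_pos (by linarith) hNpos
  have hsinne : Real.sin θ ≠ 0 := ne_of_gt hsinpos
  have hcot : Real.cot θ ^ 2 + 1 = N ^ 2 / (4 * k1 ^ 2) := by
    rw [Real.cot_eq_cos_div_sin, div_pow, hsin, hcos]
    have := Real.sin_sq_add_cos_sq θ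
    rw [hsin, hcos] at this
    field_simp at this ⊢
    nlinarith [this]
  have hPQ : 4 * k1 * k2 = P - Q := by rw [hP, hQ]; ring
  have hcotpos : 0 < Real.cot θ ^ 2 + 1 := by rw [hcot]; positivity
  have hkey1 : (Real.cot θ ^ 2 + 1) * (tm ^ 2 + C) =
      (P - x * Q) ^ 2 / (4 * k1 ^ 2 * x ^ 2) := by
    rw [hcot, hC, htm, hPQ]
    field_simp
    linear_combination (4*k1^2*x^4*((1-x)^2*(N^2+P*Q) + (P-Q)*(P-x^2*Q) - (P-x*Q)^2) + (1-x)^2 - 4*k1^2*x^4*(1-x)^2*N^2) * hNPQ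
  have hkey2 : (Real.cot θ ^ 2 + 1) * (tp ^ 2 + C) =
      (P + x * Q) ^ 2 / (4 * k1 ^ 2 * x ^ 2) := by
    rw [hcot, hC, htp, hPQ]
    field_simp
    linear_combination (4*k1^2*x^4*((1+x)^2*(N^2+P*Q) + (P-Q)*(P-x^2*Q) - (P+x*Q)^2) + (1+x)^2 - 4*k1^2*x^4*(1+x)^2*N^2) * hNPQ
  refine ⟨hkey1, hkey2, ?_, ?_⟩
  · intro hst t ht
    obtain ⟨ht1, _⟩ := ht
    have htm0 : 0 ≤ tm := by rw [htm]; exact div_nonneg (by linarith) (le_of_lt hx0)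
    have hden : 0 < 4 * k1 ^ 2 * x ^ 2 := by positivity
    have hrhs : 0 < (P - x * Q) ^ 2 / (4 * k1 ^ 2 * x ^ 2) :=
      div_pos (pow_pos (sub_pos.mpr hst) 2) hden
    rw [← hkey1] at hrhs
    have htmC : 0 < tm ^ 2 + C := (mul_pos_iff_of_pos_left hcotpos).mp hrhs
    have hts : (t - tm) * (t + tm) ≥ 0 :=
      mul_nonneg (by linarith) (by linarith)
    have hsq : tm ^ 2 + (t - tm) * (t + tm) = t ^ 2 := by ring
    linarith
  · intro hPxQ
    have : (Real.cot θ ^ 2 + 1) * (tm ^ 2 + C) = 0 := by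
      rw [hkey1, hPxQ]
      simp
    rcases mul_eq_zero.mp this with h | h
    · linarith
    · exact h
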